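/- Let R be a (not necessarily commutative) ring. Suppose h₁, h₂, s₁, s₂ ∈ R where h₁, h₂ are central, s₁² = s₂² = 0, s₁s₂ = -s₂s₁, and each hᵢ commutes with each sⱼ. Define the 3×3 matrix A(h, s) = [[1,0,0],[h,1,-s],[s,0,1]]. Then A(h₁,s₁)·A(h₂,s₂) = A(h₁ + h₂ + s₂s₁, s₁ + s₂). -/

import Mathlib

open Matrix

/-- The 3×3 angle matrix A(h,s) = [[1,0,0],[h,1,-s],[s,0,1]]. -/
def Amat3 {R : Type*} [Ring R] (h s : R) : Matrix (Fin 3) (Fin 3) R :=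
  !![1, 0, 0; h, 1, -s; s, 0, 1]

/-- Product rule for angle matrices (Lemma 4.2(a)):
    A(h₁,s₁)·A(h₂,s₂) = A(h₁ + h₂ + s₂s₁, s₁ + s₂). -/
theorem Amat3_mul {R : Type*} [Ring R] (h₁ h₂ s₁ s₂ : R)
    (hc₁ : ∀ r : R, h₁ * r = r * h₁) (hc₂ : ∀ r : R, h₂ * r = r * h₂)
    (hs₁ : s₁ * s₁ = 0) (hs₂ : s₂ * s₂ = 0)
    (hanti : s₁ * s₂ = -(s₂ * s₁)) :
    Amat3 h₁ s₁ * Amat3 h₂ s₂ = Amat3 (h₁ + h₂ + s₂ * s₁) (s₁ + s₂) := by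
  unfold Amat3
  ext i j
  fin_cases i <;> fin_cases j <;>
    simp [Matrix.mul_apply, Fin.sum_univ_succ, hs₁, hanti] <;> (try ring_nf) <;>
    first | rfl | (simp [hanti, hs₁, hs₂]) | abel
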